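/- Let μ, ρ be probability measures on X^∞, let T_μ^n := { x_{1..n} : μ(x_{1..n}) ≥ (1/n)ρ(x_{1..n}) }, and let S ⊆ X^n be any set with ρ(T_μ^n \ S) ≤ ε for some ε ∈ (0,1). Then μ(T_μ^n \ S) ≤ ( d_n(μ,ρ) + log n + 1 + log|X| ) / ( −log ε ), where d_n(μ,ρ) is the KL divergence between the restrictions of μ and ρ to X^n. -/

import Mathlib

open MeasureTheory Filter Set
open scoped ENNReal Topology

/-- The cylinder set `[x_{1..n}]` of all infinite sequences over `X` starting with the word `s`. -/
def cylSet {X : Type*} [MeasurableSpace X] {n : ℕ} (s : Fin n → X) : Set (ℕ → X) :=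
  {ω | ∀ i : Fin n, ω (i : ℕ) = s i}

/-- The probability `μ(x_{1..n})` of the word `s` (cylinder probability), as a real number. -/
noncomputable def cylP {X : Type*} [MeasurableSpace X] (μ : Measure (ℕ → X)) {n : ℕ}
    (s : Fin n → X) : ℝ :=
  (μ (cylSet s)).toReal

open scoped Classical in
/-- The `n`-step Kullback-Leibler divergence `d_n(μ,ρ)` between the restrictions of `μ` and `ρ`
to the first `n` observations, with the convention that terms with `μ(x_{1..n}) = 0` vanish. -/
noncomputable def klDn {X : Type*} [Fintype X] [MeasurableSpace X]
    (μ ρ : Measure (ℕ → X)) (n : ℕ) : ℝ :=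
  ∑ s : Fin n → X, if cylP μ s = 0 then 0 else cylP μ s * Real.log (cylP μ s / cylP ρ s)

lemma cylP_nonneg {X : Type*} [MeasurableSpace X] (μ : Measure (ℕ → X)) {n : ℕ}
    (s : Fin n → X) : 0 ≤ cylP μ s := ENNReal.toReal_nonneg

lemma measurableSet_cylSet {X : Type*} [MeasurableSpace X] [MeasurableSingletonClass X] {n : ℕ}
    (s : Fin n → X) : MeasurableSet (cylSet s) := by
  have h : cylSet s = ⋂ i : Fin n, (fun ω : ℕ → X => ω (i : ℕ)) ⁻¹' {s i} := by
    ext ω; simp [cylSet]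
  rw [h]
  exact MeasurableSet.iInter fun i => (measurable_pi_apply _) (measurableSet_singleton _)

lemma sum_cylP_le_one {X : Type*} [MeasurableSpace X] [MeasurableSingletonClass X]
    (μ : Measure (ℕ → X)) [IsProbabilityMeasure μ] {n : ℕ} (F : Finset (Fin n → X)) :
    ∑ s ∈ F, cylP μ s ≤ 1 := by
  have hd : (F : Set (Fin n → X)).PairwiseDisjoint (fun s => cylSet s) := by
    intro a _ b _ hab
    refine Set.disjoint_left.mpr fun ω ha hb => hab ?_
    funext i; rw [← ha i, ← hb i]
  have hm := measure_biUnion_finset (μ := μ) hd (fun s _ => measurableSet_cylSet s)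
  have h1 : ∑ s ∈ F, μ (cylSet s) ≤ 1 := by
    rw [← hm]; exact prob_le_one
  calc ∑ s ∈ F, cylP μ s = (∑ s ∈ F, μ (cylSet s)).toReal := by
        rw [ENNReal.toReal_sum (fun s _ => measure_ne_top μ _)]; rfl
    _ ≤ (1 : ℝ≥0∞).toReal := ENNReal.toReal_mono ENNReal.one_ne_top h1
    _ = 1 := by simp

lemma neg_half_le_mul_log {x : ℝ} (hx : 0 ≤ x) : -(1/2 : ℝ) ≤ x * Real.log x := by
  rcases eq_or_lt_of_le hx with h | h
  · simp [← h]
  · have hs : 0 < Real.sqrt x := Real.sqrt_pos.mpr h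
    have h1 : Real.log (1 / Real.sqrt x) ≤ 1 / Real.sqrt x - 1 :=
      Real.log_le_sub_one_of_pos (by positivity)
    rw [Real.log_div one_ne_zero (ne_of_gt hs), Real.log_one] at h1
    have h2 : Real.log x = 2 * Real.log (Real.sqrt x) := by
      rw [Real.log_sqrt hx]; ring
    have h3 : Real.sqrt x * Real.sqrt x = x := Real.mul_self_sqrt hx
    have h4 : x * (1 / Real.sqrt x) = Real.sqrt x := by
      field_simp; rw [sq, h3]
    have h5 : x * (1 - 1/Real.sqrt x) ≤ x * Real.log (Real.sqrt x) :=
      mul_le_mul_of_nonneg_left (by linarith) hx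
    nlinarith [sq_nonneg (Real.sqrt x - 1/2)]

open scoped Classical in
lemma log_sum_ineq {ι : Type*} (F : Finset ι) (p q : ι → ℝ)
    (hp : ∀ s ∈ F, 0 ≤ p s) (hq : ∀ s ∈ F, 0 ≤ q s)
    (hac : ∀ s ∈ F, q s = 0 → p s = 0) :
    (∑ s ∈ F, p s) * Real.log ((∑ s ∈ F, p s) / (∑ s ∈ F, q s)) ≤
      ∑ s ∈ F, (if p s = 0 then 0 else p s * Real.log (p s / q s)) := by
  set P := ∑ s ∈ F, p s with hP
  set Q := ∑ s ∈ F, q s with hQ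
  rcases eq_or_lt_of_le (Finset.sum_nonneg hp) with h0 | hPpos
  · have hz : ∀ s ∈ F, p s = 0 :=
      (Finset.sum_eq_zero_iff_of_nonneg hp).mp h0.symm
    have hP0 : P = 0 := by rw [hP, ← h0]
    rw [Finset.sum_congr rfl (fun s hs => by rw [if_pos (hz s hs)])]
    simp [hP0]
  · have hQpos : 0 < Q := by
      by_contra hc
      push_neg at hc
      have hQ0 : Q = 0 := le_antisymm hc (Finset.sum_nonneg hq)
      have h5 : ∀ s ∈ F, q s = 0 := (Finset.sum_eq_zero_iff_of_nonneg hq).mp hQ0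
      have h6 : ∀ s ∈ F, p s = 0 := fun s hs => hac s hs (h5 s hs)
      have : P = 0 := Finset.sum_eq_zero h6
      linarith
    set F' := F.filter (fun s => ¬ p s = 0) with hF'
    have hsub : F' ⊆ F := Finset.filter_subset _ _
    have hRHS : ∑ s ∈ F, (if p s = 0 then 0 else p s * Real.log (p s / q s))
        = ∑ s ∈ F', p s * Real.log (p s / q s) := by
      rw [Finset.sum_filter]
      exact Finset.sum_congr rfl (fun s hs => by by_cases h : p s = 0 <;> simp [h])
    have hPsum : ∑ s ∈ F', p s = P := by
      rw [hF', hP]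
      exact Finset.sum_filter_ne_zero F
    have hkey : ∀ s ∈ F', p s * Real.log (P/Q) + (p s - q s * (P/Q))
        ≤ p s * Real.log (p s / q s) := by
      intro s hs
      have hps : 0 < p s := by
        have := Finset.mem_filter.mp hs
        exact lt_of_le_of_ne (hp s this.1 ) (Ne.symm this.2)
      have hqs : 0 < q s := by
        have hmem := (Finset.mem_filter.mp hs).1
        rcases eq_or_lt_of_le (hq s hmem) with h | h
        · exact absurd (hac s hmem h.symm) (ne_of_gt hps)
        · exact h
      have hlog : Real.log ((q s * P)/(p s * Q)) ≤ (q s * P)/(p s * Q) - 1 :=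
        Real.log_le_sub_one_of_pos (by positivity)
      have e1 : Real.log ((q s * P)/(p s * Q))
          = Real.log (q s) + Real.log P - (Real.log (p s) + Real.log Q) := by
        rw [Real.log_div (by positivity) (by positivity),
          Real.log_mul (ne_of_gt hqs) (ne_of_gt hPpos),
          Real.log_mul (ne_of_gt hps) (ne_of_gt hQpos)]
      have e2 : Real.log (P/Q) = Real.log P - Real.log Q :=
        Real.log_div (ne_of_gt hPpos) (ne_of_gt hQpos)
      have e3 : Real.log (p s / q s) = Real.log (p s) - Real.log (q s) :=
        Real.log_div (ne_of_gt hps) (ne_of_gt hqs)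
      rw [e1] at hlog
      have e4 : (q s * P)/(p s * Q) * p s = q s * (P/Q) := by
        field_simp
      nlinarith [mul_le_mul_of_nonneg_right hlog (le_of_lt hps)]
    calc P * Real.log (P/Q)
        = P * Real.log (P/Q) + (P - (P/Q) * Q) := by
          field_simp; ring
      _ ≤ P * Real.log (P/Q) + (P - (P/Q) * ∑ s ∈ F', q s) := by
          have hq' : ∑ s ∈ F', q s ≤ Q :=
            Finset.sum_le_sum_of_subset_of_nonneg hsub (fun s hs _ => hq s hs)
          have : (P/Q) * ∑ s ∈ F', q s ≤ (P/Q) * Q :=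
            mul_le_mul_of_nonneg_left hq' (by positivity)
          linarith
      _ = ∑ s ∈ F', (p s * Real.log (P/Q) + (p s - q s * (P/Q))) := by
          rw [Finset.sum_add_distrib, ← Finset.sum_mul, hPsum, Finset.sum_sub_distrib,
            hPsum, ← Finset.sum_mul]
          ring
      _ ≤ ∑ s ∈ F', p s * Real.log (p s / q s) := Finset.sum_le_sum hkey
      _ = _ := hRHS.symm

lemma neg_half_le_mul_log_div {P Q : ℝ} (hP : 0 ≤ P) (hP1 : P ≤ 1) (hQ : 0 ≤ Q) (hQ1 : Q ≤ 1)
    (himp : P ≠ 0 → 0 < Q) : -(1/2 : ℝ) ≤ P * Real.log (P/Q) := by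
  rcases eq_or_lt_of_le hP with h | h
  · simp [← h]
  · have hQpos : 0 < Q := himp (ne_of_gt h)
    have h1 : P ≤ P / Q := by
      rw [le_div_iff₀ hQpos]; nlinarith
    have h2 : Real.log P ≤ Real.log (P/Q) := Real.log_le_log h h1
    have h3 : -(1/2 : ℝ) ≤ P * Real.log P := neg_half_le_mul_log hP
    nlinarith

open scoped Classical in
/-- Bound (11): if `ρ(T_μ^n \ S) ≤ ε` for `ε ∈ (0,1)`, then
`μ(T_μ^n \ S) ≤ (d_n(μ,ρ) + log n + 1 + log|X|)/(−log ε)`. -/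
theorem mu_T_minus_S_bound {X : Type*} [Fintype X] [MeasurableSpace X]
    [MeasurableSingletonClass X] (μ ρ : Measure (ℕ → X))
    [IsProbabilityMeasure μ] [IsProbabilityMeasure ρ] (n : ℕ) (hn : 1 ≤ n)
    (hac : ∀ s : Fin n → X, cylP ρ s = 0 → cylP μ s = 0)
    (S : Finset (Fin n → X)) (ε : ℝ) (hε : ε ∈ Set.Ioo (0 : ℝ) 1)
    (hρS : ∑ s ∈ (Finset.univ.filter
        (fun s : Fin n → X => (1 / (n : ℝ)) * cylP ρ s ≤ cylP μ s)) \ S, cylP ρ s ≤ ε) :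
    ∑ s ∈ (Finset.univ.filter
        (fun s : Fin n → X => (1 / (n : ℝ)) * cylP ρ s ≤ cylP μ s)) \ S, cylP μ s
      ≤ (klDn μ ρ n + Real.log n + 1 + Real.log (Fintype.card X)) / (-Real.log ε) := by
  obtain ⟨hε0, hε1⟩ := hε
  have hnX : Nonempty X := by
    by_contra h
    have hE : IsEmpty X := not_nonempty_iff.mp h
    have h1 : (Set.univ : Set (ℕ → X)) = ∅ := by
      rw [Set.eq_empty_iff_forall_notMem]
      intro f _
      exact hE.false (f 0)
    have h2 := measure_univ (μ := μ)
    rw [h1] at h2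
    simp at h2
  have hlogX : 0 ≤ Real.log (Fintype.card X) := by
    refine Real.log_nonneg ?_
    have := Fintype.card_pos (α := X)
    exact_mod_cast this
  have hn0 : (0:ℝ) < n := by exact_mod_cast hn
  have hlogn : 0 ≤ Real.log n := Real.log_nonneg (by exact_mod_cast hn)
  have hlogε : Real.log ε < 0 := Real.log_neg hε0 hε1
  set f := fun s : Fin n → X =>
    if cylP μ s = 0 then 0 else cylP μ s * Real.log (cylP μ s / cylP ρ s) with hf
  set Tf := Finset.univ.filter
    (fun s : Fin n → X => (1 / (n : ℝ)) * cylP ρ s ≤ cylP μ s) with hTf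
  set m := ∑ s ∈ Tf \ S, cylP μ s with hm
  have hklDn : klDn μ ρ n = ∑ s : Fin n → X, f s := rfl
  have hdec1 : ∑ s ∈ Finset.univ \ Tf, f s + ∑ s ∈ Tf, f s = ∑ s : Fin n → X, f s :=
    Finset.sum_sdiff (Finset.subset_univ Tf)
  have hdec2 : ∑ s ∈ Tf ∩ S, f s + ∑ s ∈ Tf \ S, f s = ∑ s ∈ Tf, f s :=
    Finset.sum_inter_add_sum_sdiff Tf S f
  -- Bound on T ∩ S
  have hB : -Real.log n ≤ ∑ s ∈ Tf ∩ S, f s := by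
    have hpt : ∀ s ∈ Tf ∩ S, cylP μ s * (-Real.log n) ≤ f s := by
      intro s hs
      have hmem : s ∈ Tf := (Finset.mem_inter.mp hs).1
      have hpred : (1 / (n : ℝ)) * cylP ρ s ≤ cylP μ s := by
        have := Finset.mem_filter.mp (hTf ▸ hmem)
        exact this.2
      by_cases h : cylP μ s = 0
      · simp [hf, h]
      · have hppos : 0 < cylP μ s := lt_of_le_of_ne (cylP_nonneg μ s) (Ne.symm h)
        have hqpos : 0 < cylP ρ s := by
          rcases eq_or_lt_of_le (cylP_nonneg ρ s) with h' | h'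
          · exact absurd (hac s h'.symm) h
          · exact h'
        have hd : 1/(n:ℝ) ≤ cylP μ s / cylP ρ s := by
          rw [le_div_iff₀ hqpos]
          calc 1/(n:ℝ) * cylP ρ s ≤ cylP μ s := hpred
            _ = cylP μ s := rfl
        have hl : Real.log (1/(n:ℝ)) ≤ Real.log (cylP μ s / cylP ρ s) :=
          Real.log_le_log (by positivity) hd
        rw [Real.log_div one_ne_zero (ne_of_gt hn0), Real.log_one] at hl
        have hmul := mul_le_mul_of_nonneg_left hl (le_of_lt hppos)
        simp only [hf, if_neg h]
        nlinarith
    have hsum := Finset.sum_le_sum hpt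
    have hone := sum_cylP_le_one μ (Tf ∩ S)
    have hmm : (1:ℝ) * (-Real.log n) ≤ (∑ s ∈ Tf ∩ S, cylP μ s) * (-Real.log n) :=
      mul_le_mul_of_nonpos_right hone (by linarith)
    rw [← Finset.sum_mul] at hsum
    linarith
  -- Bound outside T
  have hC : -(1/2 : ℝ) ≤ ∑ s ∈ Finset.univ \ Tf, f s := by
    have hls := log_sum_ineq (Finset.univ \ Tf) (cylP μ) (cylP ρ)
      (fun s _ => cylP_nonneg μ s) (fun s _ => cylP_nonneg ρ s) (fun s _ h => hac s h)
    have hmain : -(1/2 : ℝ) ≤ (∑ s ∈ Finset.univ \ Tf, cylP μ s) *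
        Real.log ((∑ s ∈ Finset.univ \ Tf, cylP μ s) / (∑ s ∈ Finset.univ \ Tf, cylP ρ s)) := by
      refine neg_half_le_mul_log_div (Finset.sum_nonneg fun s _ => cylP_nonneg μ s)
        (sum_cylP_le_one μ _) (Finset.sum_nonneg fun s _ => cylP_nonneg ρ s)
        (sum_cylP_le_one ρ _) ?_
      intro hne
      rcases eq_or_lt_of_le (Finset.sum_nonneg fun s (_ : s ∈ Finset.univ \ Tf) => cylP_nonneg ρ s) with h | h
      · exfalso
        apply hne
        refine Finset.sum_eq_zero fun s hs => ?_
        exact hac s ((Finset.sum_eq_zero_iff_of_nonneg (fun s _ => cylP_nonneg ρ s)).mp h.symm s hs)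
      · exact h
    calc -(1/2 : ℝ) ≤ _ := hmain
      _ ≤ ∑ s ∈ Finset.univ \ Tf, f s := hls
  -- Bound on T \ S
  have hA : -(1/2 : ℝ) + m * (-Real.log ε) ≤ ∑ s ∈ Tf \ S, f s := by
    have hls := log_sum_ineq (Tf \ S) (cylP μ) (cylP ρ)
      (fun s _ => cylP_nonneg μ s) (fun s _ => cylP_nonneg ρ s) (fun s _ h => hac s h)
    rw [← hm] at hls
    set QA := ∑ s ∈ Tf \ S, cylP ρ s with hQA
    have hQAnn : 0 ≤ QA := Finset.sum_nonneg fun s _ => cylP_nonneg ρ s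
    rcases eq_or_lt_of_le (hm ▸ Finset.sum_nonneg fun s (_ : s ∈ Tf \ S) => cylP_nonneg μ s) with h | h
    · -- m = 0
      have hm0 : m = 0 := h.symm
      rw [hm0] at hls ⊢
      simp only [zero_mul] at hls ⊢
      linarith
    · -- m > 0
      have hQApos : 0 < QA := by
        rcases eq_or_lt_of_le hQAnn with h' | h'
        · exfalso
          have hz : ∀ s ∈ Tf \ S, cylP ρ s = 0 :=
            (Finset.sum_eq_zero_iff_of_nonneg (fun s _ => cylP_nonneg ρ s)).mp h'.symm
          have : m = 0 := hm ▸ Finset.sum_eq_zero fun s hs => hac s (hz s hs)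
          linarith
        · exact h'
      have hdd : m / ε ≤ m / QA :=
        div_le_div_of_nonneg_left (le_of_lt h) hQApos hρS
      have hll : Real.log (m/ε) ≤ Real.log (m/QA) :=
        Real.log_le_log (by positivity) hdd
      have hmono := mul_le_mul_of_nonneg_left hll (le_of_lt h)
      have hsplit : Real.log (m/ε) = Real.log m - Real.log ε :=
        Real.log_div (ne_of_gt h) (ne_of_gt hε0)
      have hmlm : -(1/2 : ℝ) ≤ m * Real.log m := neg_half_le_mul_log (le_of_lt h)
      nlinarith
  -- conclusion
  rw [le_div_iff₀ (by linarith : (0:ℝ) < -Real.log ε)]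
  have : klDn μ ρ n = ∑ s ∈ Tf ∩ S, f s + ∑ s ∈ Tf \ S, f s + ∑ s ∈ Finset.univ \ Tf, f s := by
    rw [hklDn, ← hdec1, ← hdec2]; ring
  nlinarith
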